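/- Let Λ ⊂ ℝⁿ be a lattice, α ∈ ℝⁿ, Q ≥ 0 an integer with kα ∉ Λ for 1 ≤ k ≤ Q, and let Λ(α,Q) = ⋃_{k=0}^{Q} (kα + Λ). If X ⊂ ℝⁿ is a measurable set with vol(X) > det(Λ)/(Q+1), then there exist two distinct points x₁, x₂ ∈ X such that x₁ − x₂ ∈ Λ(α,Q). -/

import Mathlib

open MeasureTheory Set Filter Pointwise

noncomputable section

/-- The lattice `B·ℤⁿ` generated by an invertible matrix `B`. -/
def latticeOf {n : ℕ} (B : Matrix (Fin n) (Fin n) ℝ) : Set (Fin n → ℝ) :=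
  {x | ∃ z : Fin n → ℤ, x = B.mulVec fun i => (z i : ℝ)}

/-- The periodic lattice `Λ(α,Q) = ⋃_{k=0}^{Q} (kα + Λ)`. -/
def periodicLattice {n : ℕ} (B : Matrix (Fin n) (Fin n) ℝ) (α : Fin n → ℝ) (Q : ℕ) :
    Set (Fin n → ℝ) :=
  {x | ∃ k : ℕ, k ≤ Q ∧ ∃ y ∈ latticeOf B, x = (k : ℝ) • α + y}

/-- The `i`-th successive minimum of a set `L` with respect to the body `K`. -/
def succMin {n : ℕ} (L K : Set (Fin n → ℝ)) (i : ℕ) : ℝ :=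
  sInf {l : ℝ | 0 ≤ l ∧ i ≤ Module.finrank ℝ (Submodule.span ℝ (L ∩ l • K))}

/-- The first successive minimum: smallest `l ≥ 0` with a nonzero point of `L` in `l • K`. -/
def firstMin {n : ℕ} (L K : Set (Fin n → ℝ)) : ℝ :=
  sInf {l : ℝ | 0 ≤ l ∧ ∃ x ∈ L, x ≠ 0 ∧ x ∈ l • K}

/-- The norm induced by a `0`-symmetric convex body `K`. -/
def normK {n : ℕ} (K : Set (Fin n → ℝ)) (x : Fin n → ℝ) : ℝ :=
  sInf {l : ℝ | 0 ≤ l ∧ x ∈ l • K}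

/-- The dual lattice of `latticeOf B`. -/
def dualLattice {n : ℕ} (B : Matrix (Fin n) (Fin n) ℝ) : Set (Fin n → ℝ) :=
  {u | ∀ y ∈ latticeOf B, ∃ z : ℤ, ∑ i, u i * y i = z}

/-- The density of a densest packing of translates of `K`: the supremum of upper
densities (computed with cubical windows) over all packings by translates of `K`. -/
def packingDensity {n : ℕ} (K : Set (Fin n → ℝ)) : ℝ :=
  sSup {d : ℝ | ∃ C : Set (Fin n → ℝ),
    (C.Pairwise fun c₁ c₂ =>
      Disjoint (interior ((c₁ + ·) '' K)) (interior ((c₂ + ·) '' K))) ∧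
    d = limsup (fun R : ℝ =>
      (volume ((⋃ c ∈ C, (c + ·) '' K) ∩ {x | ∀ i, |x i| ≤ R})).toReal /
        (volume {x : Fin n → ℝ | ∀ i, |x i| ≤ R}).toReal) atTop}

lemma latticeOf_zero_mem {n : ℕ} (B : Matrix (Fin n) (Fin n) ℝ) : (0 : Fin n → ℝ) ∈ latticeOf B :=
  ⟨0, by funext j; simp [Matrix.mulVec, dotProduct]⟩

lemma latticeOf_neg_mem {n : ℕ} (B : Matrix (Fin n) (Fin n) ℝ) {x : Fin n → ℝ}
    (hx : x ∈ latticeOf B) : -x ∈ latticeOf B := by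
  obtain ⟨z, rfl⟩ := hx
  refine ⟨-z, ?_⟩
  have h : (fun i => ((-z) i : ℝ)) = -(fun i => (z i : ℝ)) := by
    funext i; simp
  rw [h, Matrix.mulVec_neg]

/-- Helper: from two points of `X` whose difference is `d • α + g` with `g ∈ Λ`,
`d ≤ Q`, and `d ≠ 0 ∨ g ≠ 0`, produce the conclusion. -/
lemma key_step {n : ℕ} (B : Matrix (Fin n) (Fin n) ℝ) (α : Fin n → ℝ) (Q : ℕ)
    (hα : ∀ k : ℕ, 1 ≤ k → k ≤ Q → (k : ℝ) • α ∉ latticeOf B)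
    (X : Set (Fin n → ℝ)) {x₁ x₂ : Fin n → ℝ} (h₁ : x₁ ∈ X) (h₂ : x₂ ∈ X)
    {d : ℕ} (hd : d ≤ Q) {g : Fin n → ℝ} (hg : g ∈ latticeOf B)
    (hne : d ≠ 0 ∨ g ≠ 0) (heq : x₁ - x₂ = (d : ℝ) • α + g) :
    ∃ y₁ ∈ X, ∃ y₂ ∈ X, y₁ ≠ y₂ ∧ y₁ - y₂ ∈ periodicLattice B α Q := by
  refine ⟨x₁, h₁, x₂, h₂, ?_, d, hd, g, hg, heq⟩
  intro h
  rw [h, sub_self] at heq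
  have hkey : (d : ℝ) • α = -g := eq_neg_of_add_eq_zero_left heq.symm
  rcases hne with hd0 | hg0
  · exact hα d (Nat.one_le_iff_ne_zero.2 hd0) hd
      (hkey ▸ latticeOf_neg_mem B hg)
  · rcases Nat.eq_zero_or_pos d with rfl | hdpos
    · exact hg0 (by simpa using heq.symm)
    · exact hα d hdpos hd (hkey ▸ latticeOf_neg_mem B hg)

theorem stmt1 {n : ℕ} (B : Matrix (Fin n) (Fin n) ℝ) (hB : IsUnit B.det)
    (α : Fin n → ℝ) (Q : ℕ)
    (hα : ∀ k : ℕ, 1 ≤ k → k ≤ Q → (k : ℝ) • α ∉ latticeOf B)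
    (X : Set (Fin n → ℝ)) (hX : MeasurableSet X)
    (hvol : volume X > ENNReal.ofReal (|B.det| / (Q + 1))) :
    ∃ x₁ ∈ X, ∃ x₂ ∈ X, x₁ ≠ x₂ ∧ x₁ - x₂ ∈ periodicLattice B α Q := by
  classical
  haveI hInv : Invertible B := B.invertibleOfIsUnitDet hB
  set b : Module.Basis (Fin n) ℝ (Fin n → ℝ) :=
    (Pi.basisFun ℝ (Fin n)).map (B.toLinearEquiv' hInv) with hb
  have hbi : ∀ i, b i = B.mulVec (Pi.single i 1) := by
    intro i
    simp only [hb, Module.Basis.map_apply, Pi.basisFun_apply]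
    rfl
  have hsum : ∀ z : Fin n → ℤ, (∑ i, z i • b i) = B.mulVec fun i => (z i : ℝ) := by
    intro z
    funext j
    rw [Finset.sum_apply]
    have hterm : ∀ i ∈ Finset.univ, (z i • b i) j = B j i * (z i : ℝ) := by
      intro i _
      rw [Pi.smul_apply, hbi, zsmul_eq_mul]
      simp [Matrix.mulVec, dotProduct, Pi.single_apply, mul_ite, mul_one, mul_zero,
        Finset.sum_ite_eq', mul_comm]
    rw [Finset.sum_congr rfl hterm]
    simp [Matrix.mulVec, dotProduct]
  have hmem : ∀ x, x ∈ latticeOf B ↔ x ∈ Submodule.span ℤ (Set.range b) := by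
    intro x
    rw [Submodule.mem_span_range_iff_exists_fun]
    constructor
    · rintro ⟨z, rfl⟩; exact ⟨z, hsum z⟩
    · rintro ⟨z, rfl⟩; exact ⟨z, hsum z⟩
  -- the translated sets
  set T : Fin (Q + 1) → Set (Fin n → ℝ) :=
    fun k => (fun x => x + ((k : ℕ) : ℝ) • α) ⁻¹' X with hT
  have hTmeas : ∀ k, MeasurableSet (T k) := fun k =>
    hX.preimage (measurable_add_const _)
  have hTvol : ∀ k, volume (T k) = volume X := fun k =>
    measure_preimage_add_right volume _ X
  by_cases hdis : ∃ k l : Fin (Q + 1), k < l ∧ ¬Disjoint (T k) (T l)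
  · obtain ⟨k, l, hkl, hnd⟩ := hdis
    obtain ⟨x, hxk, hxl⟩ := Set.not_disjoint_iff.1 hnd
    refine key_step B α Q hα X (x₁ := x + ((l : ℕ) : ℝ) • α) (x₂ := x + ((k : ℕ) : ℝ) • α)
      hxl hxk (d := (l : ℕ) - (k : ℕ)) ?_ (latticeOf_zero_mem B) (Or.inl ?_) ?_
    · omega
    · omega
    · have : (((l : ℕ) - (k : ℕ) : ℕ) : ℝ) = ((l : ℕ) : ℝ) - ((k : ℕ) : ℝ) := by
        rw [Nat.cast_sub (le_of_lt hkl)]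
      rw [this]
      module
  · -- the sets are pairwise disjoint; use Blichfeldt for the lattice
    have hpd : Pairwise (Function.onFun Disjoint T) := by
      intro k l hne
      rcases lt_or_gt_of_ne hne with h | h
      · exact not_not.1 fun hc => hdis ⟨k, l, h, hc⟩
      · exact (not_not.1 fun hc => hdis ⟨l, k, h, hc⟩).symm
    set L := (Submodule.span ℤ (Set.range b)).toAddSubgroup with hL
    haveI : Countable ↥(Submodule.span ℤ (Set.range ⇑b)).toAddSubgroup :=
      inferInstanceAs (Countable (Submodule.span ℤ (Set.range ⇑b)))
    have fund := ZSpan.isAddFundamentalDomain' b (volume : Measure (Fin n → ℝ))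
    have hFvol : volume (ZSpan.fundamentalDomain b) = ENNReal.ofReal |B.det| := by
      rw [ZSpan.volume_fundamentalDomain]
      congr 1
      have : Matrix.of ⇑b = B.transpose := by
        ext i j
        show b i j = B j i
        rw [hbi]
        simp [Matrix.mulVec, dotProduct, Pi.single_apply]
      rw [this, Matrix.det_transpose]
    have hTuvol : volume (⋃ k, T k) = (Q + 1 : ℕ) * volume X := by
      rw [measure_iUnion hpd hTmeas]
      simp only [hTvol, tsum_fintype, Finset.sum_const, Finset.card_univ, Fintype.card_fin,
        nsmul_eq_mul]
    have hlt : volume (ZSpan.fundamentalDomain b) < volume (⋃ k, T k) := by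
      rw [hFvol, hTuvol]
      have h1 : ENNReal.ofReal |B.det| =
          (Q + 1 : ℕ) * ENNReal.ofReal (|B.det| / (Q + 1)) := by
        rw [← ENNReal.ofReal_natCast, ← ENNReal.ofReal_mul (by positivity)]
        congr 1
        push_cast
        field_simp
      rw [h1]
      exact ENNReal.mul_lt_mul_right (by simp) (by simp) hvol
    obtain ⟨x, hx, y, hy, g, hg0, hgxy⟩ :=
      fund.exists_ne_zero_vadd_eq
        ((MeasurableSet.iUnion hTmeas).nullMeasurableSet) hlt
    obtain ⟨k, hxk⟩ := Set.mem_iUnion.1 hx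
    obtain ⟨l, hyl⟩ := Set.mem_iUnion.1 hy
    have hgmem : (g : Fin n → ℝ) ∈ latticeOf B := (hmem _).2 g.2
    have hgne : (g : Fin n → ℝ) ≠ 0 := fun h => hg0 (by ext; exact congrFun h _)
    have hgxy' : (g : Fin n → ℝ) + x = y := hgxy
    rcases le_or_gt (k : ℕ) (l : ℕ) with hkl | hkl
    · refine key_step B α Q hα X (x₁ := y + ((l : ℕ) : ℝ) • α) (x₂ := x + ((k : ℕ) : ℝ) • α)
        hyl hxk (d := (l : ℕ) - (k : ℕ)) (by omega) hgmem (Or.inr hgne) ?_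
      have : (((l : ℕ) - (k : ℕ) : ℕ) : ℝ) = ((l : ℕ) : ℝ) - ((k : ℕ) : ℝ) := by
        rw [Nat.cast_sub hkl]
      rw [this, ← hgxy']
      module
    · refine key_step B α Q hα X (x₁ := x + ((k : ℕ) : ℝ) • α) (x₂ := y + ((l : ℕ) : ℝ) • α)
        hxk hyl (d := (k : ℕ) - (l : ℕ)) (by omega) (latticeOf_neg_mem B hgmem)
        (Or.inr (by simpa using hgne)) ?_
      have : (((k : ℕ) - (l : ℕ) : ℕ) : ℝ) = ((k : ℕ) : ℝ) - ((l : ℕ) : ℝ) := by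
        rw [Nat.cast_sub (le_of_lt hkl)]
      rw [this, ← hgxy']
      module
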